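/- arXiv:math/0209050 — 2 statements merged into one kernel-verified Lean document; each statement's English description precedes it below -/
import Mathlib

section
/- For an integer k ≥ 0 and s > 0 define P_k(s) = s·e^s·p_k'(s)·I(s) + p_k(s) and Q_k(s) = p_k(s) − s·e^s·I(s)·(p_k(s) − q_k(s)). Then for every s > 0: (i) for every j ≥ 1, Q_j(s) = P_j(s) if and only if q_{j−1}(s) = q_j(s); (ii) for every j ≥ 0, Q_j(s) = P_{j+1}(s) if and only if p_j(s) = p_{j+1}(s). -/
open MeasureTheory ProbabilityTheory Real

open MeasureTheory ProbabilityTheory Real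

/-- Signless Stirling numbers of the first kind: coefficient of `x^j` in `x(x+1)⋯(x+k-1)`. -/
noncomputable def stirling1 (k j : ℕ) : ℝ :=
  (∏ i ∈ Finset.range k, (Polynomial.X + Polynomial.C (i : ℝ))).coeff j

/-- Stirling numbers of the second kind. -/
def stirling2 : ℕ → ℕ → ℕ
  | 0, 0 => 1
  | 0, _ + 1 => 0
  | _ + 1, 0 => 0
  | n + 1, k + 1 => (k + 1) * stirling2 n (k + 1) + stirling2 n k

/-- `p_j(t) = e^{-t} Σ_{k≥j} (t^k/k!) σ₁(k,j)/k!` (terms with `k<j` vanish). -/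
noncomputable def pfn (j : ℕ) (t : ℝ) : ℝ :=
  Real.exp (-t) * ∑' k : ℕ, t ^ k / (Nat.factorial k : ℝ) * (stirling1 k j / (Nat.factorial k : ℝ))

/-- `q_j(t) = e^{-t} Σ_{k≥0} (t^k/(k+1)!) Σ_{i=0}^k σ₁(i,j)/i!`. -/
noncomputable def qfn (j : ℕ) (t : ℝ) : ℝ :=
  Real.exp (-t) * ∑' k : ℕ, t ^ k / (Nat.factorial (k + 1) : ℝ) *
    ∑ i ∈ Finset.range (k + 1), stirling1 i j / (Nat.factorial i : ℝ)

/-- `I(t,s) = ∫_s^t e^{-ξ}/ξ dξ`. -/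
noncomputable def Ifun (t s : ℝ) : ℝ := ∫ ξ in s..t, Real.exp (-ξ) / ξ

/-- `I(s) = ∫_s^∞ e^{-ξ}/ξ dξ`. -/
noncomputable def Iinf (s : ℝ) : ℝ := ∫ ξ in Set.Ioi s, Real.exp (-ξ) / ξ

/-- `I₂(t,s) = ∫_s^t e^{-ξ}/ξ² dξ`. -/
noncomputable def I2fun (t s : ℝ) : ℝ := ∫ ξ in s..t, Real.exp (-ξ) / ξ ^ 2

/-- `I₂(s) = ∫_s^∞ e^{-ξ}/ξ² dξ`. -/
noncomputable def I2inf (s : ℝ) : ℝ := ∫ ξ in Set.Ioi s, Real.exp (-ξ) / ξ ^ 2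

/-- `J(t) = ∫_0^t (e^ξ - 1)/ξ dξ`. -/
noncomputable def Jfun (t : ℝ) : ℝ := ∫ ξ in (0:ℝ)..t, (Real.exp ξ - 1) / ξ

lemma stirling1_zero (j : ℕ) : stirling1 0 j = if j = 0 then 1 else 0 := by
  simp [stirling1, Polynomial.coeff_one]

lemma stirling1_succ_succ (k j : ℕ) :
    stirling1 (k + 1) (j + 1) = stirling1 k j + k * stirling1 k (j + 1) := by
  unfold stirling1
  rw [Finset.prod_range_succ, mul_add, Polynomial.coeff_add, Polynomial.coeff_mul_X,
    Polynomial.coeff_mul_C]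
  ring

lemma stirling1_succ_zero (k : ℕ) : stirling1 (k + 1) 0 = k * stirling1 k 0 := by
  unfold stirling1
  rw [Finset.prod_range_succ, mul_add, Polynomial.coeff_add, Polynomial.coeff_mul_X_zero,
    Polynomial.coeff_mul_C]
  ring

lemma stirling1_nonneg (k j : ℕ) : 0 ≤ stirling1 k j := by
  induction k generalizing j with
  | zero => rw [stirling1_zero]; split <;> norm_num
  | succ k ih =>
    cases j with
    | zero => rw [stirling1_succ_zero]; exact mul_nonneg (Nat.cast_nonneg k) (ih 0)
    | succ j =>
      rw [stirling1_succ_succ]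
      exact add_nonneg (ih j) (mul_nonneg (Nat.cast_nonneg k) (ih (j + 1)))

lemma stirling1_le (k j : ℕ) : stirling1 k j ≤ (Nat.factorial k : ℝ) := by
  induction k generalizing j with
  | zero => rw [stirling1_zero]; split <;> norm_num
  | succ k ih =>
    have hle : (Nat.factorial k : ℝ) ≥ 0 := Nat.cast_nonneg _
    have h : (Nat.factorial (k + 1) : ℝ) = (k + 1) * Nat.factorial k := by
      rw [Nat.factorial_succ]; push_cast; ring
    cases j with
    | zero =>
      rw [stirling1_succ_zero, h]
      have := mul_le_mul_of_nonneg_left (ih 0) (Nat.cast_nonneg (α := ℝ) k)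
      nlinarith [this]
    | succ j =>
      rw [stirling1_succ_succ, h]
      have h1 := ih j
      have h2 := mul_le_mul_of_nonneg_left (ih (j + 1)) (Nat.cast_nonneg (α := ℝ) k)
      nlinarith

lemma stirling1_sum (k j : ℕ) :
    stirling1 (k + 1) (j + 1) = (Nat.factorial k : ℝ) *
      ∑ i ∈ Finset.range (k + 1), stirling1 i j / (Nat.factorial i : ℝ) := by
  induction k with
  | zero => simp [stirling1_succ_succ, stirling1_zero]
  | succ k ih =>
    rw [Finset.sum_range_succ, stirling1_succ_succ (k + 1) j, ih]
    have h1 : (Nat.factorial k : ℝ) ≠ 0 := Nat.cast_ne_zero.2 (Nat.factorial_ne_zero k)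
    have h2 : (Nat.factorial (k + 1) : ℝ) ≠ 0 := Nat.cast_ne_zero.2 (Nat.factorial_ne_zero _)
    have h : (Nat.factorial (k + 1) : ℝ) = (k + 1) * Nat.factorial k := by
      rw [Nat.factorial_succ]; push_cast; ring
    rw [h]
    field_simp
    push_cast
    ring

lemma coef_nonneg (k j : ℕ) : (0:ℝ) ≤ stirling1 k j / (Nat.factorial k : ℝ) :=
  div_nonneg (stirling1_nonneg k j) (Nat.cast_nonneg _)

lemma coef_le_one (k j : ℕ) : stirling1 k j / (Nat.factorial k : ℝ) ≤ 1 := by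
  rw [div_le_one (by exact_mod_cast Nat.factorial_pos k)]
  exact stirling1_le k j

lemma summable_p (j : ℕ) (t : ℝ) :
    Summable (fun k : ℕ => t ^ k / (Nat.factorial k : ℝ) * (stirling1 k j / (Nat.factorial k : ℝ))) := by
  apply Summable.of_norm_bounded (Real.summable_pow_div_factorial |t|)
  intro k
  have h : ‖t ^ k / (Nat.factorial k : ℝ) * (stirling1 k j / (Nat.factorial k : ℝ))‖
      = |t| ^ k / (Nat.factorial k : ℝ) * (stirling1 k j / (Nat.factorial k : ℝ)) := by
    rw [norm_mul, Real.norm_eq_abs, Real.norm_eq_abs, abs_of_nonneg (coef_nonneg k j),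
      abs_div, abs_pow, Nat.abs_cast]
  rw [h]
  calc |t| ^ k / (Nat.factorial k : ℝ) * (stirling1 k j / (Nat.factorial k : ℝ))
      ≤ |t| ^ k / (Nat.factorial k : ℝ) * 1 := by
        apply mul_le_mul_of_nonneg_left (coef_le_one k j) (by positivity)
    _ = |t| ^ k / (Nat.factorial k : ℝ) := mul_one _

lemma summable_u (R : ℝ) :
    Summable (fun k : ℕ => (k : ℝ) * R ^ (k - 1) / (Nat.factorial k : ℝ)) := by
  apply (summable_nat_add_iff 1).1
  apply (Real.summable_pow_div_factorial R).congr
  intro m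
  have h1 : (Nat.factorial m : ℝ) ≠ 0 := Nat.cast_ne_zero.2 (Nat.factorial_ne_zero m)
  have h2 : ((m : ℝ) + 1) ≠ 0 := by positivity
  simp only [Nat.add_sub_cancel, Nat.factorial_succ]
  push_cast
  field_simp

lemma hasDerivAt_G (j : ℕ) (s : ℝ) :
    HasDerivAt (fun t : ℝ => ∑' k : ℕ, t ^ k / (Nat.factorial k : ℝ) *
        (stirling1 k (j + 1) / (Nat.factorial k : ℝ)))
      (∑' k : ℕ, s ^ k / (Nat.factorial (k + 1) : ℝ) *
        ∑ i ∈ Finset.range (k + 1), stirling1 i j / (Nat.factorial i : ℝ)) s := by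
  set R := |s| + 1 with hR
  have hsR : s ∈ Metric.ball (0 : ℝ) R := by
    simp only [Metric.mem_ball, dist_zero_right, Real.norm_eq_abs]
    linarith [abs_nonneg s]
  have h0R : (0 : ℝ) ∈ Metric.ball (0 : ℝ) R := by
    simp only [Metric.mem_ball, dist_self]
    positivity
  have hbound : ∀ (k : ℕ) (y : ℝ), |y| ≤ R →
      ‖(k : ℝ) * y ^ (k - 1) / (Nat.factorial k : ℝ) * (stirling1 k (j + 1) / (Nat.factorial k : ℝ))‖
        ≤ (k : ℝ) * R ^ (k - 1) / (Nat.factorial k : ℝ) := by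
    intro k y hy
    have h : ‖(k : ℝ) * y ^ (k - 1) / (Nat.factorial k : ℝ) * (stirling1 k (j + 1) / (Nat.factorial k : ℝ))‖
        = (k : ℝ) * |y| ^ (k - 1) / (Nat.factorial k : ℝ) * (stirling1 k (j + 1) / (Nat.factorial k : ℝ)) := by
      rw [norm_mul, Real.norm_eq_abs, Real.norm_eq_abs, abs_of_nonneg (coef_nonneg k (j + 1)),
        abs_div, abs_mul, abs_pow, Nat.abs_cast, Nat.abs_cast]
    rw [h]
    calc (k : ℝ) * |y| ^ (k - 1) / (Nat.factorial k : ℝ) * (stirling1 k (j + 1) / (Nat.factorial k : ℝ))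
        ≤ (k : ℝ) * R ^ (k - 1) / (Nat.factorial k : ℝ) * 1 := by
          apply mul_le_mul _ (coef_le_one k (j + 1)) (coef_nonneg k (j + 1)) (by positivity)
          gcongr
      _ = (k : ℝ) * R ^ (k - 1) / (Nat.factorial k : ℝ) := mul_one _
  have key := hasDerivAt_tsum_of_isPreconnected (summable_u R) Metric.isOpen_ball
    (convex_ball (0 : ℝ) R).isPreconnected
    (g := fun k t => t ^ k / (Nat.factorial k : ℝ) * (stirling1 k (j + 1) / (Nat.factorial k : ℝ)))
    (g' := fun k y => (k : ℝ) * y ^ (k - 1) / (Nat.factorial k : ℝ) * (stirling1 k (j + 1) / (Nat.factorial k : ℝ)))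
    (fun k y _ => ((hasDerivAt_pow k y).div_const (Nat.factorial k : ℝ)).mul_const _)
    (fun k y hy => hbound k y (by
      rw [Metric.mem_ball, dist_zero_right, Real.norm_eq_abs] at hy; exact hy.le))
    h0R (summable_p (j + 1) 0) hsR
  have hsums : Summable (fun k : ℕ => (k : ℝ) * s ^ (k - 1) / (Nat.factorial k : ℝ) *
      (stirling1 k (j + 1) / (Nat.factorial k : ℝ))) := by
    apply Summable.of_norm_bounded (summable_u R)
    intro k
    exact hbound k s (by linarith [abs_nonneg s])
  have heq : (∑' k : ℕ, (k : ℝ) * s ^ (k - 1) / (Nat.factorial k : ℝ) *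
      (stirling1 k (j + 1) / (Nat.factorial k : ℝ)))
      = ∑' k : ℕ, s ^ k / (Nat.factorial (k + 1) : ℝ) *
        ∑ i ∈ Finset.range (k + 1), stirling1 i j / (Nat.factorial i : ℝ) := by
    rw [Summable.tsum_eq_zero_add hsums]
    simp only [Nat.cast_zero, zero_mul, zero_div, zero_add]
    apply tsum_congr
    intro m
    rw [stirling1_sum m j]
    have h1 : (Nat.factorial m : ℝ) ≠ 0 := Nat.cast_ne_zero.2 (Nat.factorial_ne_zero m)
    have h2 : ((m : ℝ) + 1) ≠ 0 := by positivity
    simp only [Nat.add_sub_cancel, Nat.factorial_succ]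
    push_cast
    field_simp
  rw [← heq]
  exact key

lemma hasDerivAt_pfn (j : ℕ) (s : ℝ) :
    HasDerivAt (pfn (j + 1)) (qfn j s - pfn (j + 1) s) s := by
  have he : HasDerivAt (fun t : ℝ => Real.exp (-t)) (-Real.exp (-s)) s := by
    simpa [Function.comp_def] using (Real.hasDerivAt_exp (-s)).comp s (hasDerivAt_neg s)
  have h2 := he.mul (hasDerivAt_G j s)
  have h3 : qfn j s - pfn (j + 1) s =
      -Real.exp (-s) * (∑' k : ℕ, s ^ k / (Nat.factorial k : ℝ) *
        (stirling1 k (j + 1) / (Nat.factorial k : ℝ))) +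
      Real.exp (-s) * ∑' k : ℕ, s ^ k / (Nat.factorial (k + 1) : ℝ) *
        ∑ i ∈ Finset.range (k + 1), stirling1 i j / (Nat.factorial i : ℝ) := by
    unfold pfn qfn; ring
  have h4 : HasDerivAt (fun t : ℝ => Real.exp (-t) * ∑' k : ℕ, t ^ k / (Nat.factorial k : ℝ) *
      (stirling1 k (j + 1) / (Nat.factorial k : ℝ))) (qfn j s - pfn (j + 1) s) s := by
    rw [h3]; exact h2
  exact h4


lemma integrableOn_exp_div_const (s : ℝ) :
    IntegrableOn (fun ξ : ℝ => Real.exp (-ξ) / s) (Set.Ioi s) := by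
  have h := exp_neg_integrableOn_Ioi s (zero_lt_one (α := ℝ))
  simp only [neg_one_mul] at h
  exact h.div_const s

lemma integrableOn_exp_div (s : ℝ) (hs : 0 < s) :
    IntegrableOn (fun ξ : ℝ => Real.exp (-ξ) / ξ) (Set.Ioi s) := by
  apply (integrableOn_exp_div_const s).mono'
  · exact ((Real.continuous_exp.comp continuous_neg).continuousOn.div continuousOn_id
      (fun x hx => ne_of_gt (hs.trans hx))).aestronglyMeasurable measurableSet_Ioi
  · refine (ae_restrict_iff' measurableSet_Ioi).2 (ae_of_all _ fun x hx => ?_)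
    have hx0 : 0 < x := hs.trans hx
    rw [Real.norm_eq_abs, abs_of_nonneg (div_nonneg (Real.exp_nonneg _) hx0.le)]
    gcongr
    exact hx.le

lemma Iinf_pos (s : ℝ) (hs : 0 < s) : 0 < Iinf s := by
  rw [Iinf, setIntegral_pos_iff_support_of_nonneg_ae _ (integrableOn_exp_div s hs)]
  · have hsub : Set.Ioi s ⊆ Function.support (fun ξ : ℝ => Real.exp (-ξ) / ξ) :=
      fun x hx => ne_of_gt (div_pos (Real.exp_pos _) (hs.trans hx))
    calc (0 : ENNReal) < volume (Set.Ioi s) := by rw [Real.volume_Ioi]; exact ENNReal.zero_lt_top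
      _ ≤ volume (Function.support (fun ξ : ℝ => Real.exp (-ξ) / ξ) ∩ Set.Ioi s) :=
        measure_mono (Set.subset_inter hsub (le_refl _))
  · refine (ae_restrict_iff' measurableSet_Ioi).2 (ae_of_all _ fun x hx => ?_)
    exact div_nonneg (Real.exp_nonneg _) (hs.trans hx).le

lemma Iinf_lt (s : ℝ) (hs : 0 < s) : Iinf s < Real.exp (-s) / s := by
  have hgi := integrableOn_exp_div_const s
  have hfi := integrableOn_exp_div s hs
  have hdi : IntegrableOn (fun ξ : ℝ => Real.exp (-ξ) / s - Real.exp (-ξ) / ξ) (Set.Ioi s) := by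
    exact hgi.sub hfi
  have hpos : 0 < ∫ ξ in Set.Ioi s, (Real.exp (-ξ) / s - Real.exp (-ξ) / ξ) := by
    rw [setIntegral_pos_iff_support_of_nonneg_ae _ hdi]
    · have hsub : Set.Ioi s ⊆ Function.support (fun ξ : ℝ => Real.exp (-ξ) / s - Real.exp (-ξ) / ξ) := by
        intro x hx
        have : Real.exp (-x) / x < Real.exp (-x) / s :=
          div_lt_div_of_pos_left (Real.exp_pos _) hs hx
        exact ne_of_gt (sub_pos.2 this)
      calc (0 : ENNReal) < volume (Set.Ioi s) := by rw [Real.volume_Ioi]; exact ENNReal.zero_lt_top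
        _ ≤ _ := measure_mono (Set.subset_inter hsub (le_refl _))
    · refine (ae_restrict_iff' measurableSet_Ioi).2 (ae_of_all _ fun x hx => ?_)
      have : Real.exp (-x) / x ≤ Real.exp (-x) / s :=
        (div_lt_div_of_pos_left (Real.exp_pos _) hs hx).le
      simp only [Pi.zero_apply]
      linarith
  rw [integral_sub hgi hfi] at hpos
  have hval : (∫ ξ in Set.Ioi s, Real.exp (-ξ) / s) = Real.exp (-s) / s := by
    rw [integral_div, integral_exp_neg_Ioi]
  rw [hval] at hpos
  rw [Iinf]
  linarith


/-- Theorem 5 (duality): with `P_k(s) = s·e^s·p_k'(s)·I(s) + p_k(s)` and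
`Q_k(s) = p_k(s) - s·e^s·I(s)·(p_k(s) - q_k(s))`, for every `s > 0`:
(i) for `j ≥ 1`, `Q_j(s) = P_j(s) ↔ q_{j-1}(s) = q_j(s)`;
(ii) for `j ≥ 0`, `Q_j(s) = P_{j+1}(s) ↔ p_j(s) = p_{j+1}(s)`. -/
theorem stmt7 (s : ℝ) (hs : 0 < s) :
    (∀ j : ℕ, 1 ≤ j →
      (pfn j s - s * Real.exp s * Iinf s * (pfn j s - qfn j s) =
          s * Real.exp s * deriv (pfn j) s * Iinf s + pfn j s ↔
        qfn (j - 1) s = qfn j s)) ∧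
    (∀ j : ℕ,
      (pfn j s - s * Real.exp s * Iinf s * (pfn j s - qfn j s) =
          s * Real.exp s * deriv (pfn (j + 1)) s * Iinf s + pfn (j + 1) s ↔
        pfn j s = pfn (j + 1) s)) := by
  have hA0 : 0 < s * Real.exp s * Iinf s :=
    mul_pos (mul_pos hs (Real.exp_pos s)) (Iinf_pos s hs)
  have hA1 : s * Real.exp s * Iinf s < 1 := by
    have h := Iinf_lt s hs
    have h2 : s * Real.exp s * Iinf s < s * Real.exp s * (Real.exp (-s) / s) :=
      mul_lt_mul_of_pos_left h (mul_pos hs (Real.exp_pos s))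
    have h3 : s * Real.exp s * (Real.exp (-s) / s) = 1 := by
      rw [Real.exp_neg]
      field_simp
    linarith
  constructor
  · intro j hj
    obtain ⟨m, rfl⟩ : ∃ m, j = m + 1 := ⟨j - 1, (Nat.succ_pred_eq_of_pos hj).symm⟩
    simp only [Nat.add_sub_cancel]
    rw [(hasDerivAt_pfn m s).deriv]
    constructor
    · intro h
      have h2 : s * Real.exp s * Iinf s * qfn m s = s * Real.exp s * Iinf s * qfn (m + 1) s := by
        linear_combination -h
      exact mul_left_cancel₀ (ne_of_gt hA0) h2
    · intro h
      linear_combination (-(s * Real.exp s * Iinf s)) * h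
  · intro j
    rw [(hasDerivAt_pfn j s).deriv]
    constructor
    · intro h
      have h2 : (1 - s * Real.exp s * Iinf s) * (pfn j s - pfn (j + 1) s) = 0 := by
        linear_combination h
      rcases mul_eq_zero.1 h2 with h3 | h3
      · linarith
      · linarith
    · intro h
      linear_combination (1 - s * Real.exp s * Iinf s) * h
end

section
/- Let t > 0, and let μ and ν be finite Borel measures on the interval [0,t]. If ∫_{[0,t]} q_k(s) dμ(s) = ∫_{[0,t]} q_k(s) dν(s) for every integer k ≥ 0, then μ = ν. (Equivalently, the linear span of the functions q_k restricted to [0,t] is dense in C([0,t]).) -/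
open MeasureTheory ProbabilityTheory Real

open MeasureTheory ProbabilityTheory Real

section Aux

lemma stirling1_natDegree_le (k : ℕ) :
    (∏ i ∈ Finset.range k, (Polynomial.X + Polynomial.C (i : ℝ))).natDegree ≤ k := by
  have h1 := Polynomial.natDegree_prod_le (Finset.range k)
    (fun i => Polynomial.X + Polynomial.C (i:ℝ))
  have h2 : ∑ i ∈ Finset.range k, (Polynomial.X + Polynomial.C (i:ℝ)).natDegree = k := by
    have : ∀ i ∈ Finset.range k, (Polynomial.X + Polynomial.C (i:ℝ)).natDegree = 1 :=
      fun i _ => Polynomial.natDegree_X_add_C (i:ℝ)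
    rw [Finset.sum_congr rfl this]
    simp
  omega

lemma stirling1_eq_zero {k j : ℕ} (h : k < j) : stirling1 k j = 0 := by
  apply Polynomial.coeff_eq_zero_of_natDegree_lt
  exact lt_of_le_of_lt (stirling1_natDegree_le k) h

lemma stirling1_eval (i : ℕ) (x : ℝ) :
    ∑ j ∈ Finset.range (i+1), stirling1 i j * x ^ j = ∏ r ∈ Finset.range i, (x + r) := by
  have hd : (∏ r ∈ Finset.range i, (Polynomial.X + Polynomial.C (r : ℝ))).natDegree < i + 1 :=
    lt_of_le_of_lt (stirling1_natDegree_le i) (Nat.lt_succ_self i)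
  have h := Polynomial.eval_eq_sum_range' hd x
  rw [Polynomial.eval_prod] at h
  simp only [Polynomial.eval_add, Polynomial.eval_X, Polynomial.eval_C] at h
  simp only [stirling1]
  exact h.symm

/-- `(n+1)(n+2)⋯(n+i) = i! * C(n+i, i)` in `ℝ`. -/
lemma prod_shift (n i : ℕ) :
    ∏ r ∈ Finset.range i, ((n:ℝ)+1+r) = (i.factorial : ℝ) * ((n+i).choose i) := by
  induction i with
  | zero => simp
  | succ i ih =>
      rw [Finset.prod_range_succ, ih]
      have key : (n+i).succ * (n+i).choose i = (n+i+1).choose (i+1) * (i+1) :=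
        Nat.add_one_mul_choose_eq (n+i) i
      have keyR : ((n:ℝ)+i+1) * ((n+i).choose i) = ((n+i+1).choose (i+1) : ℝ) * (i+1) := by
        exact_mod_cast congrArg (fun x : ℕ => (x:ℝ)) key
      have e1 : ((n:ℝ)+1+i) = ((n:ℝ)+i+1) := by ring
      have e2 : n + (i+1) = n + i + 1 := by omega
      rw [e1, e2, Nat.factorial_succ]
      push_cast
      push_cast at keyR
      nlinarith [keyR]

lemma stirling1_le_s9 (i j : ℕ) : stirling1 i j ≤ i.factorial := by
  by_cases hij : j ≤ i
  · have h1 : ∑ j' ∈ Finset.range (i+1), stirling1 i j' * (1:ℝ) ^ j'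
        = ∏ r ∈ Finset.range i, ((1:ℝ) + r) := stirling1_eval i 1
    have h2 : ∏ r ∈ Finset.range i, ((1:ℝ) + r) = (i.factorial : ℝ) := by
      have := prod_shift 0 i
      simpa using this
    have h3 : stirling1 i j * (1:ℝ)^j ≤ ∑ j' ∈ Finset.range (i+1), stirling1 i j' * (1:ℝ)^j' := by
      apply Finset.single_le_sum (f := fun j' => stirling1 i j' * (1:ℝ)^j')
      · intro j' _
        have := stirling1_nonneg i j'
        positivity
      · exact Finset.mem_range.mpr (Nat.lt_succ_of_le hij)
    rw [h1, h2] at h3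
    simpa using h3
  · rw [stirling1_eq_zero (Nat.lt_of_not_le hij)]
    positivity

/-- Hockey stick: `∑_{i≤k} C(n+i,i) = C(n+k+1,k)`. -/
lemma hockey (n k : ℕ) :
    ∑ i ∈ Finset.range (k+1), (n+i).choose i = (n+k+1).choose k := by
  induction k with
  | zero => simp
  | succ k ih =>
      rw [Finset.sum_range_succ, ih]
      have e2 : n + (k+1) = n + k + 1 := by omega
      rw [e2]
      have : (n+k+1+1).choose (k+1) = (n+k+1).choose k + (n+k+1).choose (k+1) :=
        Nat.choose_succ_succ (n+k+1) k
      omega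

/-- Vandermonde-type identity: `∑_{l<n+1} C(n+1,l+1) C(k,l) = C(n+1+k, k+1)`. -/
lemma nat_vandermonde (n k : ℕ) :
    ∑ l ∈ Finset.range (n+1), (n+1).choose (l+1) * k.choose l = (n+1+k).choose (k+1) := by
  have h1 : (n+1+k).choose (k+1)
      = ∑ ij ∈ Finset.HasAntidiagonal.antidiagonal (k+1), (n+1).choose ij.1 * k.choose ij.2 :=
    Nat.add_choose_eq (n+1) k (k+1)
  rw [Finset.Nat.sum_antidiagonal_eq_sum_range_succ_mk] at h1
  rw [Finset.sum_range_succ'] at h1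
  have h2 : (n+1).choose 0 * k.choose (k+1-0) = 0 := by
    simp [Nat.choose_eq_zero_of_lt (Nat.lt_succ_self k)]
  rw [h2, add_zero] at h1
  have h3 : ∀ l ∈ Finset.range (k+1),
      (n+1).choose (l+1) * k.choose (k+1-(l+1)) = (n+1).choose (l+1) * k.choose l := by
    intro l hl
    have hlk : l ≤ k := Nat.lt_succ_iff.mp (Finset.mem_range.mp hl)
    have : k+1-(l+1) = k - l := by omega
    rw [this, Nat.choose_symm hlk]
  rw [Finset.sum_congr rfl h3] at h1
  -- both sums equal a sum over a common large range
  have big : ∀ m : ℕ, ∑ l ∈ Finset.range m, (n+1).choose (l+1) * k.choose l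
      = ∑ l ∈ Finset.range (n+1+k+1), (n+1).choose (l+1) * k.choose l → True := fun _ _ => trivial
  have ext1 : ∑ l ∈ Finset.range (k+1), (n+1).choose (l+1) * k.choose l
      = ∑ l ∈ Finset.range (n+1+k+1), (n+1).choose (l+1) * k.choose l := by
    apply Finset.sum_subset
    · apply Finset.range_subset_range.mpr; omega
    · intro l _ hl
      have : k < l := by simp only [Finset.mem_range] at hl; omega
      rw [Nat.choose_eq_zero_of_lt this, Nat.mul_zero]
  have ext2 : ∑ l ∈ Finset.range (n+1), (n+1).choose (l+1) * k.choose l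
      = ∑ l ∈ Finset.range (n+1+k+1), (n+1).choose (l+1) * k.choose l := by
    apply Finset.sum_subset
    · apply Finset.range_subset_range.mpr; omega
    · intro l _ hl
      have : n+1 < l+1 := by simp only [Finset.mem_range] at hl; omega
      rw [Nat.choose_eq_zero_of_lt this, Nat.zero_mul]
  rw [ext2, ← ext1, h1]

end Aux

section Core

/-- Coefficients of the polynomial `q`-combination. -/
noncomputable def qcoef (n l : ℕ) : ℝ := ((n+1).choose (l+1) : ℝ) / (((n:ℝ)+1) * l.factorial)

/-- The polynomial `∑' j (n+1)^j q_j(s)`. -/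
noncomputable def qpoly (n : ℕ) (s : ℝ) : ℝ := ∑ l ∈ Finset.range (n+1), qcoef n l * s ^ l

lemma qcoef_nonneg (n l : ℕ) : 0 ≤ qcoef n l := by
  unfold qcoef; positivity

lemma hasSum_exp_aux (s : ℝ) : HasSum (fun m : ℕ => s^m / m.factorial) (Real.exp s) := by
  have h1 := Real.summable_pow_div_factorial s
  have h2 : Real.exp s = ∑' m : ℕ, s^m / m.factorial := by
    rw [Real.exp_eq_exp_ℝ, NormedSpace.exp_eq_tsum_div]
  rw [h2]
  exact h1.hasSum

lemma hasSum_shift (s : ℝ) (l : ℕ) :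
    HasSum (fun k : ℕ => if l ≤ k then s^k / ((k-l).factorial : ℝ) else 0)
      (s^l * Real.exp s) := by
  have base : HasSum (fun m : ℕ => s^l * (s^m / m.factorial)) (s^l * Real.exp s) :=
    (hasSum_exp_aux s).mul_left _
  have hinj : Function.Injective (fun m : ℕ => m + l) := fun a b hab => by
    simpa using hab
  rw [← Function.Injective.hasSum_iff hinj ?_]
  · have : ((fun k : ℕ => if l ≤ k then s^k / ((k-l).factorial : ℝ) else 0)
        ∘ (fun m : ℕ => m + l)) = fun m : ℕ => s^l * (s^m / m.factorial) := by
      funext m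
      simp only [Function.comp_apply, if_pos (Nat.le_add_left l m), Nat.add_sub_cancel]
      rw [pow_add, mul_comm (s^m) (s^l), mul_div_assoc]
    rw [this]
    exact base
  · intro x hx
    have : x < l := by
      by_contra hc
      push_neg at hc
      exact hx ⟨x - l, by simp; omega⟩
    rw [if_neg (by omega)]

lemma choose_le_two_pow (m j : ℕ) : m.choose j ≤ 2^m := by
  by_cases hj : j ≤ m
  · calc m.choose j ≤ ∑ i ∈ Finset.range (m+1), m.choose i :=
        Finset.single_le_sum (fun i _ => Nat.zero_le _) (Finset.mem_range.mpr (by omega))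
    _ = 2^m := Nat.sum_range_choose m
  · rw [Nat.choose_eq_zero_of_lt (by omega)]
    exact Nat.zero_le _

lemma summable_v (n : ℕ) {s : ℝ} (hs : 0 ≤ s) :
    Summable (fun k : ℕ => s^k / ((k+1).factorial : ℝ) * ((n+k+1).choose k : ℝ)) := by
  apply Summable.of_nonneg_of_le (f := fun k => 2^(n+1) * ((2*s)^k / k.factorial))
  · intro k; positivity
  · intro k
    have h1 : ((n+k+1).choose k : ℝ) ≤ 2^(n+k+1) := by
      exact_mod_cast choose_le_two_pow (n+k+1) k
    have h2 : (k.factorial : ℝ) ≤ ((k+1).factorial : ℝ) := by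
      exact_mod_cast Nat.factorial_le (by omega)
    have hk0 : (0:ℝ) < k.factorial := by positivity
    have hk1 : (0:ℝ) < (k+1).factorial := by positivity
    calc s^k / ((k+1).factorial : ℝ) * ((n+k+1).choose k : ℝ)
        ≤ s^k / (k.factorial : ℝ) * (2:ℝ)^(n+k+1) := by
          gcongr
      _ = 2^(n+1) * ((2*s)^k / k.factorial) := by
          rw [mul_pow, pow_add]
          ring
  · exact ((Real.summable_pow_div_factorial (2*s)).mul_left _)

lemma rowsum (n k : ℕ) (s : ℝ) :
    HasSum (fun j : ℕ => ((n:ℝ)+1)^j * (s^k / ((k+1).factorial : ℝ) *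
        ∑ i ∈ Finset.range (k+1), stirling1 i j / i.factorial))
      (s^k / ((k+1).factorial : ℝ) * ((n+k+1).choose k : ℝ)) := by
  have hvanish : ∀ j ∉ Finset.range (k+1),
      ((n:ℝ)+1)^j * (s^k / ((k+1).factorial : ℝ) *
        ∑ i ∈ Finset.range (k+1), stirling1 i j / i.factorial) = 0 := by
    intro j hj
    simp only [Finset.mem_range, not_lt] at hj
    have hsum0 : ∑ i ∈ Finset.range (k+1), stirling1 i j / i.factorial = 0 :=
      Finset.sum_eq_zero fun i hi => by
        have hik : i < j := by
          have := Finset.mem_range.mp hi; omega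
        rw [stirling1_eq_zero hik, zero_div]
    rw [hsum0, mul_zero, mul_zero]
  have heq : ∑ j ∈ Finset.range (k+1), ((n:ℝ)+1)^j * (s^k / ((k+1).factorial : ℝ) *
        ∑ i ∈ Finset.range (k+1), stirling1 i j / i.factorial)
      = s^k / ((k+1).factorial : ℝ) * ((n+k+1).choose k : ℝ) := by
    set c : ℝ := s^k / ((k+1).factorial : ℝ) with hc
    set R := Finset.range (k+1) with hR
    have step1 : ∀ i ∈ R, ∑ j ∈ R, stirling1 i j * ((n:ℝ)+1)^j
        = (i.factorial : ℝ) * ((n+i).choose i : ℝ) := by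
      intro i hi
      have hik : i + 1 ≤ k + 1 := by
        have := Finset.mem_range.mp hi; omega
      have hsub : ∑ j ∈ Finset.range (i+1), stirling1 i j * ((n:ℝ)+1)^j
          = ∑ j ∈ R, stirling1 i j * ((n:ℝ)+1)^j := by
        apply Finset.sum_subset (Finset.range_subset_range.mpr hik)
        intro j _ hj
        have hij : i < j := by simp only [Finset.mem_range] at hj; omega
        rw [stirling1_eq_zero hij, zero_mul]
      rw [← hsub, stirling1_eval i ((n:ℝ)+1), prod_shift n i]
    have expand : ∀ j ∈ R, ((n:ℝ)+1)^j * (c * ∑ i ∈ R, stirling1 i j / i.factorial)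
        = ∑ i ∈ R, c / i.factorial * (stirling1 i j * ((n:ℝ)+1)^j) := by
      intro j _
      rw [Finset.mul_sum, Finset.mul_sum]
      apply Finset.sum_congr rfl
      intro i _
      ring
    rw [Finset.sum_congr rfl expand, Finset.sum_comm]
    have inner : ∀ i ∈ R, ∑ j ∈ R, c / i.factorial * (stirling1 i j * ((n:ℝ)+1)^j)
        = c * ((n+i).choose i : ℝ) := by
      intro i hi
      rw [← Finset.mul_sum, step1 i hi]
      have : (i.factorial : ℝ) ≠ 0 := by positivity
      field_simp
    rw [Finset.sum_congr rfl inner, ← Finset.mul_sum]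
    congr 1
    exact_mod_cast congrArg (fun x : ℕ => (x : ℝ)) (hockey n k)
  have := hasSum_sum_of_ne_finset_zero (L := SummationFilter.unconditional ℕ) (s := Finset.range (k+1)) hvanish
  rwa [heq] at this

end Core

section Main

lemma vandermonde_real (n k : ℕ) :
    ((n+k+1).choose k : ℝ) / ((k+1).factorial : ℝ)
      = ∑ l ∈ Finset.range (n+1), qcoef n l *
          (if l ≤ k then (((k-l).factorial : ℝ))⁻¹ else 0) := by
  have perl : ∀ l ∈ Finset.range (n+1), qcoef n l *
      (if l ≤ k then (((k-l).factorial : ℝ))⁻¹ else 0)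
      = (((n+1).choose (l+1) : ℝ) * (k.choose l : ℝ)) / (((n:ℝ)+1) * (k.factorial : ℝ)) := by
    intro l _
    by_cases hlk : l ≤ k
    · rw [if_pos hlk]
      have hfac : (k.choose l : ℝ) * (l.factorial : ℝ) * ((k-l).factorial : ℝ)
          = (k.factorial : ℝ) := by
        exact_mod_cast congrArg (fun x : ℕ => (x:ℝ)) (Nat.choose_mul_factorial_mul_factorial hlk)
      unfold qcoef
      have h1 : (l.factorial : ℝ) ≠ 0 := by positivity
      have h2 : ((k-l).factorial : ℝ) ≠ 0 := by positivity
      have h3 : (k.factorial : ℝ) ≠ 0 := by positivity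
      have h4 : ((n:ℝ)+1) ≠ 0 := by positivity
      field_simp
      linear_combination (-(((n+1).choose (l+1) : ℝ))) * hfac
    · rw [if_neg hlk]
      have : k.choose l = 0 := Nat.choose_eq_zero_of_lt (by omega)
      rw [this]
      simp
  rw [Finset.sum_congr rfl perl]
  rw [← Finset.sum_div]
  have hv : ∑ l ∈ Finset.range (n+1), (n+1).choose (l+1) * k.choose l
      = (n+k+1).choose (k+1) := by
    have := nat_vandermonde n k
    have e : n+1+k = n+k+1 := by omega
    rwa [e] at this
  have hcast : ∑ l ∈ Finset.range (n+1), (((n+1).choose (l+1) : ℝ) * (k.choose l : ℝ))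
      = ((n+k+1).choose (k+1) : ℝ) := by
    exact_mod_cast congrArg (fun x : ℕ => (x:ℝ)) hv
  rw [hcast]
  -- goal: C(n+k+1,k)/(k+1)! = C(n+k+1,k+1)/((n+1)*k!)
  have key : ((n+k+1).choose (k+1) : ℝ) * (k+1) = ((n+k+1).choose k : ℝ) * ((n:ℝ)+1) := by
    have h := Nat.choose_succ_right_eq (n+k+1) k
    have e : n+k+1-k = n+1 := by omega
    rw [e] at h
    exact_mod_cast congrArg (fun x : ℕ => (x:ℝ)) h
  have hfs : ((k+1).factorial : ℝ) = ((k:ℝ)+1) * (k.factorial : ℝ) := by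
    rw [Nat.factorial_succ]; push_cast; ring
  have h3 : (k.factorial : ℝ) ≠ 0 := by positivity
  have h4 : ((n:ℝ)+1) ≠ 0 := by positivity
  have h5 : ((k:ℝ)+1) ≠ 0 := by positivity
  rw [hfs]
  field_simp
  linear_combination (-1 : ℝ) * key

/-- The key analytic identity: `∑' j, (n+1)^j q_j(s) = qpoly n s` for `s ≥ 0`. -/
lemma qfn_hasSum (n : ℕ) {s : ℝ} (hs : 0 ≤ s) :
    HasSum (fun j : ℕ => ((n:ℝ)+1)^j * qfn j s) (qpoly n s) := by
  classical
  set u : ℕ → ℕ → ℝ := fun k j => ((n:ℝ)+1)^j * (s^k / ((k+1).factorial : ℝ) *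
      ∑ i ∈ Finset.range (k+1), stirling1 i j / i.factorial) with hu
  set v : ℕ → ℝ := fun k => s^k / ((k+1).factorial : ℝ) * ((n+k+1).choose k : ℝ) with hvdef
  have hrow : ∀ k, HasSum (u k) (v k) := fun k => rowsum n k s
  have hv : Summable v := summable_v n hs
  have h0 : ∀ p : ℕ × ℕ, 0 ≤ u p.1 p.2 := by
    intro p
    have hst : 0 ≤ ∑ i ∈ Finset.range (p.1+1), stirling1 i p.2 / i.factorial :=
      Finset.sum_nonneg fun i _ => div_nonneg (stirling1_nonneg i p.2) (by positivity)
    have hsk : (0:ℝ) ≤ s^p.1 := by positivity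
    have : (0:ℝ) ≤ ((n:ℝ)+1)^p.2 := by positivity
    have hf : (0:ℝ) < ((p.1+1).factorial : ℝ) := by positivity
    apply mul_nonneg this
    apply mul_nonneg (div_nonneg hsk hf.le) hst
  have hF : Summable (Function.uncurry u) := by
    apply (summable_prod_of_nonneg (f := Function.uncurry u) (fun p => h0 p)).mpr
    refine ⟨fun k => (hrow k).summable, ?_⟩
    have he : (fun k => ∑' j, Function.uncurry u (k, j)) = v :=
      funext fun k => (hrow k).tsum_eq
    rw [he]
    exact hv
  have hcol : ∀ j, Summable (fun k => u k j) := fun j => hF.prod_symm.prod_factor j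
  have hmarg : Summable (fun j => ∑' k, u k j) := by
    have := (summable_prod_of_nonneg (f := fun p : ℕ × ℕ => u p.2 p.1)
      (fun p => h0 p.swap)).mp hF.prod_symm
    exact this.2
  have hqfn : ∀ j, ((n:ℝ)+1)^j * qfn j s = Real.exp (-s) * ∑' k, u k j := by
    intro j
    simp only [qfn, hu]
    rw [tsum_mul_left]
    ring
  have hswap : ∑' j, ∑' k, u k j = ∑' k, ∑' j, u k j :=
    Summable.tsum_comm' hF (fun k => (hrow k).summable) hcol
  have hvsum : ∑' k, v k = Real.exp s * qpoly n s := by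
    have perk : ∀ k, v k = ∑ l ∈ Finset.range (n+1), qcoef n l *
        (if l ≤ k then s^k / ((k-l).factorial : ℝ) else 0) := by
      intro k
      have hv2 : v k = (((n+k+1).choose k : ℝ) / ((k+1).factorial : ℝ)) * s^k := by
        rw [hvdef]; ring
      rw [hv2, vandermonde_real n k, Finset.sum_mul]
      apply Finset.sum_congr rfl
      intro l _
      by_cases hlk : l ≤ k
      · rw [if_pos hlk, if_pos hlk]
        rw [div_eq_mul_inv]
        ring
      · rw [if_neg hlk, if_neg hlk]
        ring
    have hsl : ∀ l, Summable (fun k => if l ≤ k then s^k / ((k-l).factorial : ℝ) else 0) :=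
      fun l => (hasSum_shift s l).summable
    calc ∑' k, v k
        = ∑' k, ∑ l ∈ Finset.range (n+1), qcoef n l *
            (if l ≤ k then s^k / ((k-l).factorial : ℝ) else 0) := by
          exact tsum_congr perk
      _ = ∑ l ∈ Finset.range (n+1), ∑' k, qcoef n l *
            (if l ≤ k then s^k / ((k-l).factorial : ℝ) else 0) := by
          apply Summable.tsum_finsetSum
          intro l _
          exact (hsl l).mul_left _
      _ = ∑ l ∈ Finset.range (n+1), qcoef n l * (s^l * Real.exp s) := by
          apply Finset.sum_congr rfl
          intro l _
          rw [tsum_mul_left, ((hasSum_shift s l).tsum_eq)]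
      _ = Real.exp s * qpoly n s := by
          rw [qpoly, Finset.mul_sum]
          apply Finset.sum_congr rfl
          intro l _
          ring
  have hsummable : Summable (fun j => ((n:ℝ)+1)^j * qfn j s) := by
    have : (fun j => ((n:ℝ)+1)^j * qfn j s) = fun j => Real.exp (-s) * ∑' k, u k j :=
      funext hqfn
    rw [this]
    exact hmarg.mul_left _
  rw [hsummable.hasSum_iff]
  calc ∑' j, ((n:ℝ)+1)^j * qfn j s
      = ∑' j, Real.exp (-s) * ∑' k, u k j := tsum_congr hqfn
    _ = Real.exp (-s) * ∑' j, ∑' k, u k j := tsum_mul_left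
    _ = Real.exp (-s) * ∑' k, ∑' j, u k j := by rw [hswap]
    _ = Real.exp (-s) * ∑' k, v k := by
        congr 1
        exact tsum_congr fun k => (hrow k).tsum_eq
    _ = Real.exp (-s) * (Real.exp s * qpoly n s) := by rw [hvsum]
    _ = qpoly n s := by
        rw [← mul_assoc, ← Real.exp_add]
        simp

end Main

section MeasureAux

lemma qfn_term_summable (j : ℕ) (s : ℝ) :
    Summable (fun k : ℕ => s ^ k / (Nat.factorial (k + 1) : ℝ) *
      ∑ i ∈ Finset.range (k + 1), stirling1 i j / (Nat.factorial i : ℝ)) := by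
  have hd : ∀ k : ℕ, 0 ≤ (∑ i ∈ Finset.range (k+1), stirling1 i j / (i.factorial:ℝ))
      ∧ (∑ i ∈ Finset.range (k+1), stirling1 i j / (i.factorial:ℝ)) ≤ ((k:ℝ)+1) := by
    intro k
    constructor
    · exact Finset.sum_nonneg fun i _ => div_nonneg (stirling1_nonneg i j) (by positivity)
    · calc ∑ i ∈ Finset.range (k+1), stirling1 i j / (i.factorial:ℝ)
          ≤ ∑ _i ∈ Finset.range (k+1), (1:ℝ) := by
            apply Finset.sum_le_sum
            intro i _
            rw [div_le_one (by positivity)]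
            exact stirling1_le_s9 i j
        _ = ((k:ℝ)+1) := by simp
  apply Summable.of_norm
  apply Summable.of_nonneg_of_le (f := fun k => |s|^k / (k.factorial : ℝ))
    (fun k => norm_nonneg _)
  · intro k
    rw [Real.norm_eq_abs, abs_mul, abs_div, abs_pow]
    have h1 : |((k+1).factorial : ℝ)| = ((k+1).factorial : ℝ) := abs_of_nonneg (by positivity)
    have h2 : |∑ i ∈ Finset.range (k+1), stirling1 i j / (i.factorial:ℝ)| ≤ ((k:ℝ)+1) := by
      rw [abs_of_nonneg (hd k).1]
      exact (hd k).2
    rw [h1]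
    have hfs : ((k+1).factorial : ℝ) = ((k:ℝ)+1) * (k.factorial : ℝ) := by
      rw [Nat.factorial_succ]; push_cast; ring
    calc |s|^k / ((k+1).factorial : ℝ) * |∑ i ∈ Finset.range (k+1), stirling1 i j / (i.factorial:ℝ)|
        ≤ |s|^k / ((k+1).factorial : ℝ) * ((k:ℝ)+1) := by
          apply mul_le_mul_of_nonneg_left h2 (by positivity)
      _ = |s|^k / (k.factorial : ℝ) := by
          rw [hfs]
          have hk1 : ((k:ℝ)+1) ≠ 0 := by positivity
          have hkf : (k.factorial : ℝ) ≠ 0 := by positivity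
          field_simp
  · exact Real.summable_pow_div_factorial |s|

lemma qfn_measurable (j : ℕ) : Measurable (qfn j) := by
  have hg : Measurable (fun s : ℝ => ∑' k : ℕ, s ^ k / (Nat.factorial (k + 1) : ℝ) *
      ∑ i ∈ Finset.range (k + 1), stirling1 i j / (Nat.factorial i : ℝ)) := by
    apply measurable_of_tendsto_metrizable
      (f := fun K s => ∑ k ∈ Finset.range K, s ^ k / (Nat.factorial (k + 1) : ℝ) *
        ∑ i ∈ Finset.range (k + 1), stirling1 i j / (Nat.factorial i : ℝ))
    · intro K
      apply Finset.measurable_sum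
      intro k _
      exact ((measurable_id.pow_const k).div_const _).mul_const _
    · rw [tendsto_pi_nhds]
      intro s
      exact (qfn_term_summable j s).hasSum.tendsto_sum_nat
  exact (Real.measurable_exp.comp measurable_neg).mul hg

lemma qfn_nonneg (j : ℕ) {s : ℝ} (hs : 0 ≤ s) : 0 ≤ qfn j s := by
  unfold qfn
  apply mul_nonneg (Real.exp_nonneg _)
  apply tsum_nonneg
  intro k
  apply mul_nonneg (div_nonneg (pow_nonneg hs k) (by positivity))
  exact Finset.sum_nonneg fun i _ => div_nonneg (stirling1_nonneg i j) (by positivity)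

lemma qpoly_nonneg (n : ℕ) {s : ℝ} (hs : 0 ≤ s) : 0 ≤ qpoly n s := by
  unfold qpoly
  exact Finset.sum_nonneg fun l _ => mul_nonneg (qcoef_nonneg n l) (pow_nonneg hs l)

lemma qpoly_le (n : ℕ) {s u : ℝ} (hs : 0 ≤ s) (hsu : s ≤ u) : qpoly n s ≤ qpoly n u := by
  unfold qpoly
  apply Finset.sum_le_sum
  intro l _
  exact mul_le_mul_of_nonneg_left (pow_le_pow_left₀ hs hsu l) (qcoef_nonneg n l)

lemma qfn_le (n j : ℕ) {s : ℝ} (hs : 0 ≤ s) :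
    ((n:ℝ)+1)^j * qfn j s ≤ qpoly (2*n+1) s / 2^j := by
  have h := qfn_hasSum (2*n+1) hs
  have hle : (((2*n+1 : ℕ):ℝ)+1)^j * qfn j s ≤ qpoly (2*n+1) s := by
    have h1 := Summable.le_tsum h.summable j
      (fun j' _ => mul_nonneg (by positivity) (qfn_nonneg j' hs))
    rw [h.tsum_eq] at h1
    exact h1
  have hcast : (((2*n+1 : ℕ):ℝ)+1) = 2*((n:ℝ)+1) := by push_cast; ring
  rw [hcast, mul_pow] at hle
  rw [le_div_iff₀ (by positivity : (0:ℝ) < 2^j)]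
  calc ((n:ℝ)+1)^j * qfn j s * 2^j = 2^j * ((n:ℝ)+1)^j * qfn j s := by ring
    _ ≤ qpoly (2*n+1) s := hle

end MeasureAux

open scoped ENNReal NNReal

/-- Analytic core of Theorem 3: finite Borel measures on `[0,t]` are determined by their
integrals against the functions `q_k`. -/
theorem stmt9 (t : ℝ) (ht : 0 < t) (μ ν : Measure ℝ)
    [IsFiniteMeasure μ] [IsFiniteMeasure ν]
    (hμ : μ (Set.Icc 0 t)ᶜ = 0) (hν : ν (Set.Icc 0 t)ᶜ = 0)
    (h : ∀ k : ℕ, ∫ s in Set.Icc 0 t, qfn k s ∂μ = ∫ s in Set.Icc 0 t, qfn k s ∂ν) :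
    μ = ν := by
  have haemμ : ∀ᵐ s ∂μ, s ∈ Set.Icc 0 t := by
    rw [MeasureTheory.ae_iff]
    exact hμ
  have haemν : ∀ᵐ s ∂ν, s ∈ Set.Icc 0 t := by
    rw [MeasureTheory.ae_iff]
    exact hν
  have hrμ : μ.restrict (Set.Icc 0 t) = μ := Measure.restrict_eq_self_of_ae_mem haemμ
  have hrν : ν.restrict (Set.Icc 0 t) = ν := Measure.restrict_eq_self_of_ae_mem haemν
  rw [hrμ, hrν] at h
  -- Step 1: integrals of the polynomials `qpoly n` agree.
  have hkey : ∀ (ρ : Measure ℝ) [IsFiniteMeasure ρ], (∀ᵐ s ∂ρ, s ∈ Set.Icc 0 t) →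
      ∀ n : ℕ, ∫ s, qpoly n s ∂ρ = ∑' j : ℕ, ((n:ℝ)+1)^j * ∫ s, qfn j s ∂ρ := by
    intro ρ _ hae n
    set C := qpoly (2*n+1) t with hCdef
    have hC : 0 ≤ C := qpoly_nonneg _ ht.le
    have hswap : ∫ s, (∑' j : ℕ, ((n:ℝ)+1)^j * qfn j s) ∂ρ
        = ∑' j : ℕ, ∫ s, ((n:ℝ)+1)^j * qfn j s ∂ρ := by
      apply MeasureTheory.integral_tsum
      · intro j
        exact ((qfn_measurable j).const_mul _).aestronglyMeasurable
      · have hbound : ∀ j : ℕ, ∫⁻ s, ‖((n:ℝ)+1)^j * qfn j s‖₊ ∂ρ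
            ≤ ENNReal.ofReal C * ρ Set.univ * (ENNReal.ofReal (1/2))^j := by
          intro j
          have hptws : ∀ᵐ s ∂ρ, (‖((n:ℝ)+1)^j * qfn j s‖₊ : ℝ≥0∞)
              ≤ ENNReal.ofReal (C * (1/2)^j) := by
            filter_upwards [hae] with s hsmem
            have h1 : 0 ≤ qfn j s := qfn_nonneg j hsmem.1
            have h4 : ((n:ℝ)+1)^j * qfn j s ≤ C * (1/2)^j := by
              calc ((n:ℝ)+1)^j * qfn j s
                  ≤ qpoly (2*n+1) s / 2^j := qfn_le n j hsmem.1
                _ ≤ C / 2^j := by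
                    gcongr
                    exact qpoly_le _ hsmem.1 hsmem.2
                _ = C * (1/2)^j := by
                    rw [div_pow, one_pow]
                    ring
            have h5 : (‖((n:ℝ)+1)^j * qfn j s‖₊ : ℝ≥0∞)
                = ENNReal.ofReal (((n:ℝ)+1)^j * qfn j s) := by
              rw [← enorm_eq_nnnorm, ← ofReal_norm, Real.norm_eq_abs,
                abs_of_nonneg (mul_nonneg (by positivity) h1)]
            rw [h5]
            exact ENNReal.ofReal_le_ofReal h4
          calc ∫⁻ s, ‖((n:ℝ)+1)^j * qfn j s‖₊ ∂ρ
              ≤ ∫⁻ _, ENNReal.ofReal (C * (1/2)^j) ∂ρ := lintegral_mono_ae hptws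
            _ = ENNReal.ofReal (C * (1/2)^j) * ρ Set.univ := lintegral_const _
            _ = ENNReal.ofReal C * ρ Set.univ * (ENNReal.ofReal (1/2))^j := by
                rw [ENNReal.ofReal_mul hC, ENNReal.ofReal_pow (by norm_num)]
                ring
        have hgeo : ∑' j : ℕ, (ENNReal.ofReal (1/2))^j ≠ ⊤ := by
          have hlt : ENNReal.ofReal (1/2) < 1 := by
            rw [ENNReal.ofReal_lt_one]
            norm_num
          rw [ENNReal.tsum_geometric, Ne, ENNReal.inv_eq_top, tsub_eq_zero_iff_le]
          exact not_le.mpr hlt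
        have hle2 : ∑' j : ℕ, ∫⁻ s, ‖((n:ℝ)+1)^j * qfn j s‖₊ ∂ρ
            ≤ ENNReal.ofReal C * ρ Set.univ * ∑' j : ℕ, (ENNReal.ofReal (1/2))^j := by
          calc ∑' j : ℕ, ∫⁻ s, ‖((n:ℝ)+1)^j * qfn j s‖₊ ∂ρ
              ≤ ∑' j : ℕ, ENNReal.ofReal C * ρ Set.univ * (ENNReal.ofReal (1/2))^j :=
                ENNReal.tsum_le_tsum hbound
            _ = ENNReal.ofReal C * ρ Set.univ * ∑' j : ℕ, (ENNReal.ofReal (1/2))^j :=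
                ENNReal.tsum_mul_left
        exact ne_top_of_le_ne_top
          (ENNReal.mul_ne_top
            (ENNReal.mul_ne_top ENNReal.ofReal_ne_top (measure_ne_top ρ _)) hgeo) hle2
    calc ∫ s, qpoly n s ∂ρ
        = ∫ s, (∑' j : ℕ, ((n:ℝ)+1)^j * qfn j s) ∂ρ := by
          apply integral_congr_ae
          filter_upwards [hae] with s hs
          exact ((qfn_hasSum n hs.1).tsum_eq).symm
      _ = ∑' j : ℕ, ∫ s, ((n:ℝ)+1)^j * qfn j s ∂ρ := hswap
      _ = ∑' j : ℕ, ((n:ℝ)+1)^j * ∫ s, qfn j s ∂ρ :=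
          tsum_congr fun j => integral_const_mul _ _
  have hqp : ∀ n : ℕ, ∫ s, qpoly n s ∂μ = ∫ s, qpoly n s ∂ν := by
    intro n
    rw [hkey μ haemμ n, hkey ν haemν n]
    exact tsum_congr fun j => by rw [h j]
  -- Step 2: moments agree.
  have integ_pow : ∀ (ρ : Measure ℝ) [IsFiniteMeasure ρ], (∀ᵐ s ∂ρ, s ∈ Set.Icc 0 t) →
      ∀ m : ℕ, Integrable (fun s => s^m) ρ := by
    intro ρ _ hae m
    apply Integrable.mono' (integrable_const (t^m))
      ((measurable_id.pow_const m).aestronglyMeasurable)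
    filter_upwards [hae] with s hs
    simp only [id_eq, Real.norm_eq_abs]
    rw [abs_of_nonneg (pow_nonneg hs.1 m)]
    exact pow_le_pow_left₀ hs.1 hs.2 m
  have expand : ∀ (ρ : Measure ℝ) [IsFiniteMeasure ρ], (∀ᵐ s ∂ρ, s ∈ Set.Icc 0 t) →
      ∀ n : ℕ, ∫ s, qpoly n s ∂ρ = ∑ l ∈ Finset.range (n+1), qcoef n l * ∫ s, s^l ∂ρ := by
    intro ρ _ hae n
    unfold qpoly
    rw [integral_finset_sum _ (fun l _ => ((integ_pow ρ hae l).const_mul _))]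
    exact Finset.sum_congr rfl fun l _ => integral_const_mul _ _
  have hmom : ∀ m : ℕ, ∫ s, s^m ∂μ = ∫ s, s^m ∂ν := by
    intro m
    induction m using Nat.strong_induction_on with
    | _ m ih =>
      have hq := hqp m
      rw [expand μ haemμ m, expand ν haemν m, Finset.sum_range_succ, Finset.sum_range_succ] at hq
      have hsum_eq : ∑ l ∈ Finset.range m, qcoef m l * ∫ s, s^l ∂μ
          = ∑ l ∈ Finset.range m, qcoef m l * ∫ s, s^l ∂ν :=
        Finset.sum_congr rfl fun l hl => by rw [ih l (Finset.mem_range.mp hl)]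
      have hlast : qcoef m m * ∫ s, s^m ∂μ = qcoef m m * ∫ s, s^m ∂ν := by
        rw [hsum_eq] at hq
        linarith
      have hcm : qcoef m m ≠ 0 := by
        unfold qcoef
        rw [Nat.choose_self]
        apply div_ne_zero
        · norm_num
        · positivity
      exact mul_left_cancel₀ hcm hlast
  -- Step 3: polynomial integrals agree.
  have hpoly : ∀ p : Polynomial ℝ, ∫ s, p.eval s ∂μ = ∫ s, p.eval s ∂ν := by
    intro p
    have e : ∀ (ρ : Measure ℝ) [IsFiniteMeasure ρ], (∀ᵐ s ∂ρ, s ∈ Set.Icc 0 t) →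
        ∫ s, p.eval s ∂ρ
          = ∑ i ∈ Finset.range (p.natDegree+1), p.coeff i * ∫ s, s^i ∂ρ := by
      intro ρ _ hae
      have hev : (fun s : ℝ => p.eval s)
          = fun s : ℝ => ∑ i ∈ Finset.range (p.natDegree+1), p.coeff i * s^i :=
        funext fun s => Polynomial.eval_eq_sum_range s
      rw [hev, integral_finset_sum _ (fun i _ => ((integ_pow ρ hae i).const_mul _))]
      exact Finset.sum_congr rfl fun i _ => integral_const_mul _ _
    rw [e μ haemμ, e ν haemν]
    exact Finset.sum_congr rfl fun i _ => by rw [hmom i]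
  -- Step 4: continuous integrals agree (Weierstrass).
  have hcont : ∀ g : ℝ → ℝ, Continuous g → ∫ s, g s ∂μ = ∫ s, g s ∂ν := by
    intro g hg
    set K := (μ Set.univ).toReal + (ν Set.univ).toReal with hK
    have hK0 : 0 ≤ K := by positivity
    have hinteg : ∀ (ρ : Measure ℝ) [IsFiniteMeasure ρ], (∀ᵐ s ∂ρ, s ∈ Set.Icc 0 t) →
        ∀ (f : ℝ → ℝ), Continuous f → Integrable f ρ := by
      intro ρ _ hae f hf
      obtain ⟨Cb, hCb⟩ := (isCompact_Icc (a := (0:ℝ)) (b := t)).exists_bound_of_continuousOn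
        hf.continuousOn
      apply Integrable.mono' (integrable_const Cb) hf.measurable.aestronglyMeasurable
      filter_upwards [hae] with s hs
      exact hCb s hs
    have hdiff : ∀ ε : ℝ, 0 < ε → |(∫ s, g s ∂μ) - ∫ s, g s ∂ν| ≤ ε * K := by
      intro ε hε
      obtain ⟨p, hp⟩ := exists_polynomial_near_of_continuousOn 0 t g hg.continuousOn ε hε
      have hb : ∀ (ρ : Measure ℝ) [IsFiniteMeasure ρ], (∀ᵐ s ∂ρ, s ∈ Set.Icc 0 t) →
          |(∫ s, g s ∂ρ) - ∫ s, p.eval s ∂ρ| ≤ ε * (ρ Set.univ).toReal := by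
        intro ρ _ hae
        rw [← integral_sub (hinteg ρ hae g hg)
          (hinteg ρ hae _ p.continuous)]
        have := MeasureTheory.norm_integral_le_of_norm_le_const
          (μ := ρ) (f := fun s => g s - p.eval s) (C := ε) ?_
        · simpa [Real.norm_eq_abs, measureReal_def] using this
        · filter_upwards [hae] with s hs
          rw [Real.norm_eq_abs, abs_sub_comm]
          exact (hp s hs).le
      have h1 := hb μ haemμ
      have h2 := hb ν haemν
      have h3 : ∫ s, p.eval s ∂μ = ∫ s, p.eval s ∂ν := hpoly p
      have e : (∫ s, g s ∂μ) - ∫ s, g s ∂ν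
          = ((∫ s, g s ∂μ) - ∫ s, p.eval s ∂μ) + ((∫ s, p.eval s ∂ν) - ∫ s, g s ∂ν) := by
        rw [h3]
        ring
      rw [e]
      calc |((∫ s, g s ∂μ) - ∫ s, p.eval s ∂μ) + ((∫ s, p.eval s ∂ν) - ∫ s, g s ∂ν)|
          ≤ |(∫ s, g s ∂μ) - ∫ s, p.eval s ∂μ| + |(∫ s, p.eval s ∂ν) - ∫ s, g s ∂ν| :=
            abs_add_le _ _
        _ ≤ ε * (μ Set.univ).toReal + ε * (ν Set.univ).toReal := by
            apply add_le_add h1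
            rw [abs_sub_comm]
            exact h2
        _ = ε * K := by rw [hK]; ring
    have habs : |(∫ s, g s ∂μ) - ∫ s, g s ∂ν| ≤ 0 := by
      by_contra hcon
      push_neg at hcon
      set d := |(∫ s, g s ∂μ) - ∫ s, g s ∂ν| with hd
      have h2 := hdiff (d / (K+1)) (by positivity)
      have hlt : d / (K+1) * K < d := by
        rw [div_mul_eq_mul_div, div_lt_iff₀ (by linarith)]
        nlinarith
      linarith
    have hge := abs_nonneg ((∫ s, g s ∂μ) - ∫ s, g s ∂ν)
    have heq0 : |(∫ s, g s ∂μ) - ∫ s, g s ∂ν| = 0 := le_antisymm habs hge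
    have := abs_eq_zero.mp heq0
    linarith
  -- Step 5: conclude.
  apply MeasureTheory.ext_of_forall_lintegral_eq_of_IsFiniteMeasure
  intro f
  have hgc : Continuous fun x : ℝ => ((f x : ℝ≥0) : ℝ) :=
    NNReal.continuous_coe.comp f.continuous
  have hint : ∀ (ρ : Measure ℝ) [IsFiniteMeasure ρ],
      Integrable (fun x : ℝ => ((f x : ℝ≥0) : ℝ)) ρ := by
    intro ρ _
    obtain ⟨Cb, hCb⟩ := f.bounded
    apply Integrable.mono' (integrable_const (((f 0 : ℝ≥0) : ℝ) + Cb))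
      hgc.measurable.aestronglyMeasurable
    apply Filter.Eventually.of_forall
    intro x
    rw [Real.norm_eq_abs, abs_of_nonneg (NNReal.coe_nonneg (f x))]
    have hx := hCb x 0
    rw [NNReal.dist_eq] at hx
    have h3 : ((f x : ℝ≥0) : ℝ) - ((f 0 : ℝ≥0) : ℝ) ≤ Cb := (abs_le.mp hx).2
    linarith
  rw [MeasureTheory.lintegral_coe_eq_integral f (hint μ),
    MeasureTheory.lintegral_coe_eq_integral f (hint ν), hcont _ hgc]
end
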